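/- Let T ⊆ ℝ² be a triangle with vertices A, B, C whose angle at A is greater than or equal to π/2. Then α(T) = 2h, where h is the distance from A to the line through B and C, and this value is realized by the 2-bounce trajectory along the altitude from A to the side BC. -/

import Mathlib

open scoped ENNReal RealInnerProductSpace Pointwise

noncomputable section

variable {E : Type*} [NormedAddCommGroup E] [InnerProductSpace ℝ E]

/-- The polar body of `K` with respect to the point `z`:
`K^z = {y : ∀ x ∈ K, ⟪x - z, y⟫ ≤ 1}`. -/
def polarBody (K : Set E) (z : E) : Set E :=
  {y | ∀ x ∈ K, ⟪x - z, y⟫ ≤ (1 : ℝ)}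

/-- `q : ZMod m → E` is a closed generalized billiard trajectory of `K`:
the `q i` are points of `∂K`, consecutive points are distinct, and at each point the
change of (unit) direction is `-lam • nv` for some `lam > 0` and outer unit normal `nv`
of a supporting hyperplane of `K` at that point. -/
def IsClosedBilliardTraj (K : Set E) {m : ℕ} [NeZero m] (q : ZMod m → E) : Prop :=
  2 ≤ m ∧ (∀ i, q i ∈ frontier K) ∧ (∀ i : ZMod m, q (i + 1) ≠ q i) ∧
    ∀ i : ZMod m, ∃ (lam : ℝ) (nv : E), 0 < lam ∧ ‖nv‖ = 1 ∧
      (∀ x ∈ K, ⟪x - q i, nv⟫ ≤ (0 : ℝ)) ∧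
      ‖q (i + 1) - q i‖⁻¹ • (q (i + 1) - q i)
        - ‖q i - q (i - 1)‖⁻¹ • (q i - q (i - 1)) = -(lam • nv)

/-- The length (perimeter) of a closed polygonal trajectory. -/
def billiardLength {m : ℕ} [NeZero m] (q : ZMod m → E) : ℝ :=
  ∑ i : ZMod m, ‖q (i + 1) - q i‖

/-- `α(K)`: the infimum of the lengths of the closed generalized billiard trajectories
inside `K`, equal to `∞` if there are none. -/
def alpha (K : Set E) : ℝ≥0∞ :=
  ⨅ (m : ℕ) (_ : NeZero m) (q : ZMod m → E) (_ : IsClosedBilliardTraj K q),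
    ENNReal.ofReal (billiardLength q)

/-- The billiard product `β(K) = inf_z α(K) · α(K^z)`. -/
def billiardProduct (K : Set E) : ℝ≥0∞ :=
  ⨅ z : E, alpha K * alpha (polarBody K z)


/-! ### Auxiliary material for `alpha_obtuse_triangle` -/

section ObtuseAux

open Finset

-- pure real arithmetic lemmas
lemma obt_coneA {β γ p r : ℝ} (hβ : 0 ≤ β) (hγ : 0 ≤ γ) (hs : β + γ < 1)
    (h1 : 0 ≤ β * p + γ * r) (h2 : (1 - β) * p - γ * r ≤ 0)
    (h3 : (1 - γ) * r - β * p ≤ 0) : p ≤ 0 ∧ r ≤ 0 := by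
  have hp : p ≤ 0 := by
    by_contra hp
    push_neg at hp
    nlinarith [mul_le_mul_of_nonneg_left h2 (show (0:ℝ) ≤ 1 - γ by linarith),
      mul_le_mul_of_nonneg_left h3 hγ,
      mul_pos hp (show (0:ℝ) < 1 - β - γ by linarith)]
  refine ⟨hp, ?_⟩
  nlinarith [mul_nonneg hβ (neg_nonneg.mpr hp)]

lemma obt_coneB {β γ p r : ℝ} (hβ : 0 < β) (hγ : 0 ≤ γ) (hs : β + γ ≤ 1)
    (h1 : 0 ≤ β * p + γ * r) (h2 : (1 - β) * p - γ * r ≤ 0)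
    (h3 : (1 - γ) * r - β * p ≤ 0) : 0 ≤ p ∧ r ≤ p := by
  have hp : 0 ≤ p := by
    by_contra hp
    push_neg at hp
    have hγr : 0 < γ * r := by nlinarith
    have hγ0 : 0 < γ := by
      by_contra h
      push_neg at h
      have : γ = 0 := le_antisymm h hγ
      rw [this] at hγr; simp at hγr
    have hr : 0 < r := by
      by_contra h
      push_neg at h
      nlinarith [mul_nonpos_of_nonneg_of_nonpos hγ h]
    nlinarith [mul_pos (show (0:ℝ) < 1 - γ by linarith) hr,
      mul_pos hβ (show (0:ℝ) < -p by linarith)]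
  refine ⟨hp, ?_⟩
  by_contra hr
  push_neg at hr
  nlinarith [mul_pos (show (0:ℝ) < 1 - γ by linarith) (show (0:ℝ) < r - p by linarith),
    mul_nonneg hβ.le hp]

lemma obt_csbound {P Q k : ℝ} (b g : ℝ) :
    (P*Q - k^2) * (b+g)^2 ≤ (P+Q-2*k) * (b^2*P + g^2*Q + 2*b*g*k) := by
  nlinarith [sq_nonneg (b*(P-k) - g*(Q-k))]

lemma obt_obtusebound {P Q k gb bc : ℝ} (hP : 0 ≤ P) (hQ : 0 ≤ Q) (hk : k ≤ 0)
    (hgb : 0 ≤ gb) (hbc : 0 ≤ bc) :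
    (P*Q - k^2) * (gb+bc)^2 ≤ (P+Q-2*k) * (gb^2*Q + bc^2*P - 2*gb*bc*k) := by
  nlinarith [sq_nonneg (gb*Q - bc*P),
    mul_nonneg (mul_nonneg (mul_nonneg (neg_nonneg.mpr hk) (add_nonneg hgb hbc))
      (add_nonneg (mul_nonneg hgb hQ) (mul_nonneg hbc hP))) (by norm_num : (0:ℝ) ≤ 2),
    mul_nonneg (sq_nonneg k) (sq_nonneg (gb + bc)),
    mul_nonneg (sq_nonneg k) (mul_nonneg hgb hbc)]

-- vector helpers on the plane
local notation "E2" => EuclideanSpace ℝ (Fin 2)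

lemma obt_tri_mem_A {A u v : E2} : A ∈ convexHull ℝ ({A, A + u, A + v} : Set E2) :=
  subset_convexHull _ _ (by simp)
lemma obt_tri_mem_B {A u v : E2} : A + u ∈ convexHull ℝ ({A, A + u, A + v} : Set E2) :=
  subset_convexHull _ _ (by simp)
lemma obt_tri_mem_C {A u v : E2} : A + v ∈ convexHull ℝ ({A, A + u, A + v} : Set E2) :=
  subset_convexHull _ _ (by simp)

lemma obt_tri_subset {A u v : E2} :
    convexHull ℝ ({A, A + u, A + v} : Set E2) ⊆
      {x | ∃ β γ : ℝ, 0 ≤ β ∧ 0 ≤ γ ∧ β + γ ≤ 1 ∧ x = A + β • u + γ • v} := by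
  apply convexHull_min
  · intro x hx
    simp only [Set.mem_insert_iff, Set.mem_singleton_iff] at hx
    rcases hx with rfl | rfl | rfl
    · exact ⟨0, 0, le_rfl, le_rfl, by norm_num, by module⟩
    · exact ⟨1, 0, zero_le_one, le_rfl, by norm_num, by module⟩
    · exact ⟨0, 1, le_rfl, zero_le_one, by norm_num, by module⟩
  · rintro x ⟨b1, g1, hb1, hg1, hs1, rfl⟩ y ⟨b2, g2, hb2, hg2, hs2, rfl⟩ a b ha hb hab
    refine ⟨a*b1 + b*b2, a*g1 + b*g2, by positivity, by positivity, by nlinarith, ?_⟩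
    have hb' : b = 1 - a := by linarith
    subst hb'
    module

lemma obt_support_ineqs {A u v x n : E2} {β γ : ℝ} (hx : x = A + β • u + γ • v)
    (hn : ∀ y ∈ convexHull ℝ ({A, A + u, A + v} : Set E2), ⟪y - x, n⟫ ≤ 0) :
    0 ≤ β * ⟪u, n⟫ + γ * ⟪v, n⟫ ∧
      (1 - β) * ⟪u, n⟫ - γ * ⟪v, n⟫ ≤ 0 ∧
      (1 - γ) * ⟪v, n⟫ - β * ⟪u, n⟫ ≤ 0 := by
  have h1 := hn A obt_tri_mem_A
  have h2 := hn (A + u) obt_tri_mem_B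
  have h3 := hn (A + v) obt_tri_mem_C
  rw [hx] at h1 h2 h3
  have e1 : A - (A + β • u + γ • v) = -(β • u + γ • v) := by module
  have e2 : A + u - (A + β • u + γ • v) = (1 - β) • u - γ • v := by module
  have e3 : A + v - (A + β • u + γ • v) = (1 - γ) • v - β • u := by module
  rw [e1, inner_neg_left, inner_add_left, real_inner_smul_left, real_inner_smul_left] at h1
  rw [e2, inner_sub_left, real_inner_smul_left, real_inner_smul_left] at h2
  rw [e3, inner_sub_left, real_inner_smul_left, real_inner_smul_left] at h3
  exact ⟨by linarith, h2, h3⟩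

lemma obt_eq_zero_of_inner_eq {u v : E2} (hind : LinearIndependent ℝ ![u, v]) {z : E2}
    (h1 : ⟪u, z⟫ = 0) (h2 : ⟪v, z⟫ = 0) : z = 0 := by
  have hcard : Fintype.card (Fin 2) = Module.finrank ℝ E2 := by
    simp [finrank_euclideanSpace_fin]
  have htop := hind.span_eq_top_of_card_eq_finrank hcard
  have hz : z ∈ Submodule.span ℝ ({u, v} : Set E2) := by
    have : ({u, v} : Set E2) = Set.range ![u, v] := by
      ext w; simp [Fin.exists_fin_two]; tauto
    rw [this, htop]; trivial
  obtain ⟨a, b, hab⟩ := Submodule.mem_span_pair.1 hz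
  have hzz : ⟪z, z⟫ = (0:ℝ) := by
    nth_rewrite 1 [← hab]
    rw [inner_add_left, real_inner_smul_left, real_inner_smul_left, h1, h2]
    ring
  exact inner_self_eq_zero.mp hzz

lemma obt_le_norm_of_sq {x : E2} {c : ℝ} (hc : 0 ≤ c) (h : c^2 ≤ ⟪x, x⟫) : c ≤ ‖x‖ := by
  have h2 := Real.sqrt_le_sqrt h
  rw [Real.sqrt_sq hc, real_inner_self_eq_norm_sq, Real.sqrt_sq (norm_nonneg _)] at h2
  exact h2

lemma obt_inner_combo (u v : E2) (b g b' g' : ℝ) :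
    ⟪b • u + g • v, b' • u + g' • v⟫ =
      b*b'*⟪u,u⟫ + (b*g' + g*b')*⟪u,v⟫ + g*g'*⟪v,v⟫ := by
  simp only [inner_add_left, inner_add_right, real_inner_smul_left, real_inner_smul_right,
    real_inner_comm v u]
  ring

lemma obt_mem_frontier_of_support {K : Set (EuclideanSpace ℝ (Fin 2))}
    {x n : E2} (hx : x ∈ K) (hn : n ≠ 0)
    (hs : ∀ y ∈ K, ⟪y - x, n⟫ ≤ 0) : x ∈ frontier K := by
  rw [frontier, Set.mem_diff]
  refine ⟨subset_closure hx, fun hint => ?_⟩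
  obtain ⟨ε, hε, hball⟩ := Metric.mem_nhds_iff.1 (mem_interior_iff_mem_nhds.1 hint)
  have hnn : 0 < ‖n‖ := norm_pos_iff.mpr hn
  set c : ℝ := ε / (2 * ‖n‖) with hc
  have hcpos : 0 < c := by positivity
  have hy : x + c • n ∈ K := by
    apply hball
    simp only [Metric.mem_ball, dist_eq_norm, add_sub_cancel_left]
    rw [norm_smul, Real.norm_eq_abs, abs_of_pos hcpos, hc]
    rw [div_mul_eq_mul_div, mul_comm, mul_div_assoc]
    calc ‖n‖ * (ε / (2 * ‖n‖)) = ε / 2 := by field_simp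
    _ < ε := by linarith
  have := hs _ hy
  rw [add_sub_cancel_left, real_inner_smul_left, real_inner_self_eq_norm_sq] at this
  nlinarith [pow_pos hnn 2]

-- telescoping around the cycle
lemma obt_telescope_arc {m : ℕ} [NeZero m] (q : ZMod m → E) (base : ZMod m) :
    ∀ a b : ℕ, a ≤ b →
      ‖q (base + (b : ZMod m)) - q (base + (a : ZMod m))‖ ≤
        ∑ t ∈ Finset.Ico a b, ‖q (base + (t : ZMod m) + 1) - q (base + (t : ZMod m))‖ := by
  intro a b hab
  induction b, hab using Nat.le_induction with
  | base => simp
  | succ b hab ih =>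
    rw [Finset.sum_Ico_succ_top hab]
    have hcast : (((b + 1 : ℕ)) : ZMod m) = (b : ZMod m) + 1 := by push_cast; ring
    have tri := norm_sub_le_norm_sub_add_norm_sub (q (base + ((b+1 : ℕ) : ZMod m)))
      (q (base + (b : ZMod m))) (q (base + (a : ZMod m)))
    rw [hcast, ← add_assoc] at tri
    rw [hcast, ← add_assoc]
    linarith

lemma obt_length_eq_sum_arc {m : ℕ} [NeZero m] (q : ZMod m → E) (base : ZMod m) :
    billiardLength q
      = ∑ t ∈ Finset.Ico 0 m, ‖q (base + (t : ZMod m) + 1) - q (base + (t : ZMod m))‖ := by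
  rw [billiardLength, ← Finset.range_eq_Ico]
  refine Finset.sum_nbij' (fun (i : ZMod m) => (i - base).val)
    (fun t => base + (t : ZMod m)) ?_ ?_ ?_ ?_ ?_
  · intro a _
    exact Finset.mem_range.mpr (ZMod.val_lt _)
  · intro a _
    exact Finset.mem_univ _
  · intro a _
    show base + (((a - base).val : ℕ) : ZMod m) = a
    rw [ZMod.natCast_rightInverse (a - base)]
    ring
  · intro t ht
    show ((base + (t : ZMod m)) - base).val = t
    rw [show base + (t : ZMod m) - base = (t : ZMod m) by ring,
      ZMod.val_cast_of_lt (Finset.mem_range.mp ht)]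
  · intro a _
    have e : base + (((a - base).val : ℕ) : ZMod m) = a := by
      rw [ZMod.natCast_rightInverse (a - base)]; ring
    show _ = ‖q (base + (((a - base).val : ℕ) : ZMod m) + 1) - q (base + (((a - base).val : ℕ) : ZMod m))‖
    rw [e]

lemma obt_cycle_three_aux {m : ℕ} [NeZero m] (q : ZMod m → E) (j k l : ZMod m)
    (h : (k - j).val ≤ (l - j).val) :
    ‖q k - q j‖ + ‖q l - q k‖ + ‖q j - q l‖ ≤ billiardLength q := by
  have h2 : (l - j).val ≤ m := (ZMod.val_lt _).le
  have e1 : j + (((k - j).val : ℕ) : ZMod m) = k := by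
    rw [ZMod.natCast_rightInverse (k - j)]; ring
  have e2 : j + (((l - j).val : ℕ) : ZMod m) = l := by
    rw [ZMod.natCast_rightInverse (l - j)]; ring
  have e3 : j + ((m : ℕ) : ZMod m) = j := by
    rw [ZMod.natCast_self]; ring
  have e0 : j + ((0 : ℕ) : ZMod m) = j := by
    rw [Nat.cast_zero]; ring
  have t1 := obt_telescope_arc q j 0 (k - j).val (Nat.zero_le _)
  have t2 := obt_telescope_arc q j (k - j).val (l - j).val h
  have t3 := obt_telescope_arc q j (l - j).val m h2
  rw [e1, e0] at t1
  rw [e1, e2] at t2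
  rw [e2, e3] at t3
  rw [obt_length_eq_sum_arc q j,
    ← Finset.sum_Ico_consecutive _ (Nat.zero_le (l - j).val) h2,
    ← Finset.sum_Ico_consecutive _ (Nat.zero_le (k - j).val) h]
  linarith

lemma obt_cycle_three {m : ℕ} [NeZero m] (q : ZMod m → E) (j k l : ZMod m) :
    ‖q j - q k‖ + ‖q k - q l‖ + ‖q l - q j‖ ≤ billiardLength q := by
  rcases le_total ((k - j).val) ((l - j).val) with hor | hor
  · have := obt_cycle_three_aux q j k l hor
    rw [norm_sub_rev (q j) (q k), norm_sub_rev (q k) (q l), norm_sub_rev (q l) (q j)]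
    linarith
  · have := obt_cycle_three_aux q j l k hor
    linarith [norm_sub_rev (q l) (q k), norm_sub_rev (q k) (q l)]

lemma obt_pos {u v : EuclideanSpace ℝ (Fin 2)} (hind : LinearIndependent ℝ ![u, v]) :
    0 < ⟪u,u⟫ ∧ 0 < ⟪v,v⟫ ∧ 0 < ⟪u,u⟫ * ⟪v,v⟫ - ⟪u,v⟫^2 := by
  have hu0 : u ≠ 0 := by have := hind.ne_zero 0; simpa using this
  have hv0 : v ≠ 0 := by have := hind.ne_zero 1; simpa using this
  have hP : (0:ℝ) < ⟪u,u⟫ := by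
    rw [real_inner_self_eq_norm_sq]; exact pow_pos (norm_pos_iff.mpr hu0) 2
  have hQ : (0:ℝ) < ⟪v,v⟫ := by
    rw [real_inner_self_eq_norm_sq]; exact pow_pos (norm_pos_iff.mpr hv0) 2
  refine ⟨hP, hQ, ?_⟩
  have hw : ⟪v,v⟫ • u - ⟪u,v⟫ • v ≠ 0 := by
    intro h0
    have h0' : ⟪v,v⟫ • u + (-⟪u,v⟫) • v = 0 := by rw [neg_smul, ← sub_eq_add_neg]; exact h0
    exact hQ.ne' (LinearIndependent.pair_iff.mp hind _ _ h0').1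
  have h2 : (0:ℝ) < ⟪⟪v,v⟫ • u - ⟪u,v⟫ • v, ⟪v,v⟫ • u - ⟪u,v⟫ • v⟫ := by
    rw [real_inner_self_eq_norm_sq]; exact pow_pos (norm_pos_iff.mpr hw) 2
  have hexp : ⟪⟪v,v⟫ • u - ⟪u,v⟫ • v, ⟪v,v⟫ • u - ⟪u,v⟫ • v⟫
      = ⟪v,v⟫ * (⟪u,u⟫ * ⟪v,v⟫ - ⟪u,v⟫^2) := by
    simp only [inner_sub_left, inner_sub_right, real_inner_smul_left, real_inner_smul_right,
      real_inner_comm v u]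
    ring
  rw [hexp] at h2
  nlinarith

lemma obt_lower_bound {A u v : EuclideanSpace ℝ (Fin 2)} (hind : LinearIndependent ℝ ![u, v])
    (hk : ⟪u, v⟫ ≤ 0) {m : ℕ} [NeZero m] {q : ZMod m → EuclideanSpace ℝ (Fin 2)}
    (htraj : IsClosedBilliardTraj
      (convexHull ℝ ({A, A + u, A + v} : Set (EuclideanSpace ℝ (Fin 2)))) q) :
    2 * Real.sqrt ((⟪u,u⟫ * ⟪v,v⟫ - ⟪u,v⟫^2) / (⟪u,u⟫ + ⟪v,v⟫ - 2 * ⟪u,v⟫))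
      ≤ billiardLength q := by
  obtain ⟨hm2, hfr, hne, hexists⟩ := htraj
  choose lam nv hlam hnv hsupp heqn using hexists
  obtain ⟨hP, hQ, hD⟩ := obt_pos hind
  have hS : (0:ℝ) < ⟪u,u⟫ + ⟪v,v⟫ - 2*⟪u,v⟫ := by linarith
  -- membership and barycentric coordinates
  have hfin : Set.Finite ({A, A + u, A + v} : Set (EuclideanSpace ℝ (Fin 2))) :=
    Set.toFinite _
  have hKc : IsClosed (convexHull ℝ ({A, A + u, A + v} : Set (EuclideanSpace ℝ (Fin 2)))) :=
    (hfin.isCompact_convexHull (𝕜 := ℝ)).isClosed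
  have hqK : ∀ i, q i ∈ convexHull ℝ ({A, A + u, A + v} : Set (EuclideanSpace ℝ (Fin 2))) :=
    fun i => hKc.frontier_subset (hfr i)
  have hcoord : ∀ i, ∃ β γ : ℝ, 0 ≤ β ∧ 0 ≤ γ ∧ β + γ ≤ 1 ∧ q i = A + β • u + γ • v :=
    fun i => obt_tri_subset (hqK i)
  choose β γ hβ hγ hβγ hrep using hcoord
  have hsi := fun i => obt_support_ineqs (hrep i) (hsupp i)
  -- the sum of the (scaled) normals vanishes
  have hterm : ∀ i : ZMod m, lam i • nv i =
      (‖q ((i-1)+1) - q (i-1)‖⁻¹ • (q ((i-1)+1) - q (i-1)))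
        - (‖q (i+1) - q i‖⁻¹ • (q (i+1) - q i)) := by
    intro i
    have h := heqn i
    rw [sub_add_cancel]
    rw [← neg_neg (lam i • nv i), ← h, neg_sub]
  have hsum : ∑ i : ZMod m, lam i • nv i = (0 : EuclideanSpace ℝ (Fin 2)) := by
    rw [Finset.sum_congr rfl fun i _ => hterm i, Finset.sum_sub_distrib]
    rw [Fintype.sum_equiv (Equiv.subRight (1 : ZMod m))
      (fun i => ‖q ((i-1)+1) - q (i-1)‖⁻¹ • (q ((i-1)+1) - q (i-1)))
      (fun i => ‖q (i+1) - q i‖⁻¹ • (q (i+1) - q i)) (fun i => rfl)]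
    exact sub_self _
  have hpu : ∑ i : ZMod m, lam i * ⟪u, nv i⟫ = 0 := by
    have h1 : (⟪u, ∑ i : ZMod m, lam i • nv i⟫ : ℝ) = ∑ i : ZMod m, lam i * ⟪u, nv i⟫ := by
      rw [inner_sum]
      exact Finset.sum_congr rfl fun i _ => real_inner_smul_right _ _ _
    rw [hsum, inner_zero_right] at h1
    exact h1.symm
  have hpv : ∑ i : ZMod m, lam i * ⟪v, nv i⟫ = 0 := by
    have h1 : (⟪v, ∑ i : ZMod m, lam i • nv i⟫ : ℝ) = ∑ i : ZMod m, lam i * ⟪v, nv i⟫ := by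
      rw [inner_sum]
      exact Finset.sum_congr rfl fun i _ => real_inner_smul_right _ _ _
    rw [hsum, inner_zero_right] at h1
    exact h1.symm
  have hnvzero : ∀ i, ⟪u, nv i⟫ = 0 → ⟪v, nv i⟫ = 0 → False := by
    intro i h1 h2
    have h0 := obt_eq_zero_of_inner_eq hind h1 h2
    have h3 := hnv i
    rw [h0, norm_zero] at h3
    norm_num at h3
  -- the trajectory touches all three side lines
  have htoucha : ∃ i, β i + γ i = 1 := by
    by_contra hcon
    push_neg at hcon
    have hcone := fun i => obt_coneA (hβ i) (hγ i) (lt_of_le_of_ne (hβγ i) (hcon i))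
      (hsi i).1 (hsi i).2.1 (hsi i).2.2
    have hz1 : ∀ i : ZMod m, lam i * ⟪u, nv i⟫ = 0 := fun i =>
      (Finset.sum_eq_zero_iff_of_nonpos (fun j _ =>
        mul_nonpos_iff.mpr (Or.inl ⟨(hlam j).le, (hcone j).1⟩))).mp hpu i (Finset.mem_univ i)
    have hz2 : ∀ i : ZMod m, lam i * ⟪v, nv i⟫ = 0 := fun i =>
      (Finset.sum_eq_zero_iff_of_nonpos (fun j _ =>
        mul_nonpos_iff.mpr (Or.inl ⟨(hlam j).le, (hcone j).2⟩))).mp hpv i (Finset.mem_univ i)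
    exact hnvzero 0 ((mul_eq_zero.mp (hz1 0)).resolve_left (hlam 0).ne')
      ((mul_eq_zero.mp (hz2 0)).resolve_left (hlam 0).ne')
  have htouchb : ∃ i, β i = 0 := by
    by_contra hcon
    push_neg at hcon
    have hcone := fun i => obt_coneB (lt_of_le_of_ne (hβ i) (Ne.symm (hcon i))) (hγ i) (hβγ i)
      (hsi i).1 (hsi i).2.1 (hsi i).2.2
    have hz1 : ∀ i : ZMod m, lam i * ⟪u, nv i⟫ = 0 := fun i =>
      (Finset.sum_eq_zero_iff_of_nonneg (fun j _ =>
        mul_nonneg (hlam j).le (hcone j).1)).mp hpu i (Finset.mem_univ i)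
    have hup0 : ∀ i, ⟪u, nv i⟫ = 0 := fun i =>
      (mul_eq_zero.mp (hz1 i)).resolve_left (hlam i).ne'
    have hz2 : ∀ i : ZMod m, lam i * ⟪v, nv i⟫ = 0 := fun i =>
      (Finset.sum_eq_zero_iff_of_nonpos (fun j _ =>
        mul_nonpos_iff.mpr (Or.inl ⟨(hlam j).le,
          (hcone j).2.trans (le_of_eq (hup0 j))⟩))).mp hpv i (Finset.mem_univ i)
    exact hnvzero 0 (hup0 0) ((mul_eq_zero.mp (hz2 0)).resolve_left (hlam 0).ne')
  have htouchc : ∃ i, γ i = 0 := by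
    by_contra hcon
    push_neg at hcon
    have hcone := fun i => obt_coneB (β := γ i) (γ := β i)
      (p := (⟪v, nv i⟫ : ℝ)) (r := (⟪u, nv i⟫ : ℝ))
      (lt_of_le_of_ne (hγ i) (Ne.symm (hcon i))) (hβ i) (by linarith [hβγ i])
      (by linarith [(hsi i).1]) (hsi i).2.2 (hsi i).2.1
    have hz1 : ∀ i : ZMod m, lam i * ⟪v, nv i⟫ = 0 := fun i =>
      (Finset.sum_eq_zero_iff_of_nonneg (fun j _ =>
        mul_nonneg (hlam j).le (hcone j).1)).mp hpv i (Finset.mem_univ i)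
    have hvp0 : ∀ i, ⟪v, nv i⟫ = 0 := fun i =>
      (mul_eq_zero.mp (hz1 i)).resolve_left (hlam i).ne'
    have hz2 : ∀ i : ZMod m, lam i * ⟪u, nv i⟫ = 0 := fun i =>
      (Finset.sum_eq_zero_iff_of_nonpos (fun j _ =>
        mul_nonpos_iff.mpr (Or.inl ⟨(hlam j).le,
          (hcone j).2.trans (le_of_eq (hvp0 j))⟩))).mp hpu i (Finset.mem_univ i)
    exact hnvzero 0 ((mul_eq_zero.mp (hz2 0)).resolve_left (hlam 0).ne') (hvp0 0)
  obtain ⟨ia, hia⟩ := htoucha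
  obtain ⟨ib, hib⟩ := htouchb
  obtain ⟨ic, hic⟩ := htouchc
  set h0 : ℝ := Real.sqrt ((⟪u,u⟫ * ⟪v,v⟫ - ⟪u,v⟫^2) / (⟪u,u⟫ + ⟪v,v⟫ - 2 * ⟪u,v⟫)) with hh0
  have hh0n : (0:ℝ) ≤ h0 := Real.sqrt_nonneg _
  have hh0sq : h0^2 = (⟪u,u⟫ * ⟪v,v⟫ - ⟪u,v⟫^2) / (⟪u,u⟫ + ⟪v,v⟫ - 2 * ⟪u,v⟫) :=
    Real.sq_sqrt (div_nonneg hD.le hS.le)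
  have hd1 : h0 * (1 - γ ib) ≤ ‖q ia - q ib‖ := by
    have hdiff : q ia - q ib = β ia • u + (γ ia - γ ib) • v := by
      rw [hrep ia, hrep ib, hib]; module
    apply obt_le_norm_of_sq (mul_nonneg hh0n (by linarith [hβγ ib, hβ ib]))
    rw [hdiff, obt_inner_combo, mul_pow, hh0sq, div_mul_eq_mul_div, div_le_iff₀ hS]
    have hcs := obt_csbound (P := (⟪u,u⟫:ℝ)) (Q := (⟪v,v⟫:ℝ)) (k := (⟪u,v⟫:ℝ))
      (β ia) (γ ia - γ ib)
    have e : β ia + (γ ia - γ ib) = 1 - γ ib := by linarith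
    rw [e] at hcs
    exact hcs.trans (le_of_eq (by ring))
  have hd2 : h0 * (1 - β ic) ≤ ‖q ic - q ia‖ := by
    have hdiff : q ic - q ia = (β ic - β ia) • u + (-(γ ia)) • v := by
      rw [hrep ic, hrep ia, hic]; module
    apply obt_le_norm_of_sq (mul_nonneg hh0n (by linarith [hβγ ic, hγ ic]))
    rw [hdiff, obt_inner_combo, mul_pow, hh0sq, div_mul_eq_mul_div, div_le_iff₀ hS]
    have hcs := obt_csbound (P := (⟪u,u⟫:ℝ)) (Q := (⟪v,v⟫:ℝ)) (k := (⟪u,v⟫:ℝ))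
      (β ic - β ia) (-(γ ia))
    have e : (β ic - β ia) + (-(γ ia)) = -(1 - β ic) := by linarith
    rw [e, neg_sq] at hcs
    exact hcs.trans (le_of_eq (by ring))
  have hd3 : h0 * (γ ib + β ic) ≤ ‖q ib - q ic‖ := by
    have hdiff : q ib - q ic = (-(β ic)) • u + γ ib • v := by
      rw [hrep ib, hrep ic, hib, hic]; module
    apply obt_le_norm_of_sq (mul_nonneg hh0n (add_nonneg (hγ ib) (hβ ic)))
    rw [hdiff, obt_inner_combo, mul_pow, hh0sq, div_mul_eq_mul_div, div_le_iff₀ hS]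
    have hob := obt_obtusebound hP.le hQ.le hk (hγ ib) (hβ ic)
    exact hob.trans (le_of_eq (by ring))
  have hcyc := obt_cycle_three q ia ib ic
  calc 2 * h0 = h0*(1 - γ ib) + h0*(γ ib + β ic) + h0*(1 - β ic) := by ring
    _ ≤ ‖q ia - q ib‖ + ‖q ib - q ic‖ + ‖q ic - q ia‖ := by
        exact add_le_add (add_le_add hd1 hd3) hd2
    _ ≤ billiardLength q := hcyc


end ObtuseAux

set_option maxHeartbeats 1000000 in
/-- For a triangle `T` with vertices `A, B, C` whose angle at `A` is at
least `π/2`, `α(T) = 2 h`, where `h` is the distance from `A` to the line through `B` and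
`C`, and this value is realized by the 2-bounce trajectory along the altitude from `A`. -/
theorem alpha_obtuse_triangle (A B C : EuclideanSpace ℝ (Fin 2))
    (hABC : AffineIndependent ℝ ![A, B, C])
    (hA : Real.pi / 2 ≤ EuclideanGeometry.angle B A C) :
    alpha (convexHull ℝ {A, B, C}) =
      ENNReal.ofReal
        (2 * Metric.infDist A (affineSpan ℝ {B, C} : Set (EuclideanSpace ℝ (Fin 2)))) ∧
      ∃ F : EuclideanSpace ℝ (Fin 2), F ∈ segment ℝ B C ∧
        dist A F = Metric.infDist A (affineSpan ℝ {B, C} : Set (EuclideanSpace ℝ (Fin 2))) ∧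
        ∃ q : ZMod 2 → EuclideanSpace ℝ (Fin 2),
          IsClosedBilliardTraj (convexHull ℝ {A, B, C}) q ∧ q 0 = A ∧ q 1 = F ∧
            billiardLength q =
              2 * Metric.infDist A (affineSpan ℝ {B, C} : Set (EuclideanSpace ℝ (Fin 2))) := by
  classical
  set u : EuclideanSpace ℝ (Fin 2) := B - A with hu
  set v : EuclideanSpace ℝ (Fin 2) := C - A with hv
  clear_value u v
  have hBu : A + u = B := by rw [hu]; abel
  have hCv : A + v = C := by rw [hv]; abel
  -- linear independence of u, v
  have hli0 := (affineIndependent_iff_linearIndependent_vsub ℝ ![A, B, C] 0).mp hABC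
  have hind : LinearIndependent ℝ ![u, v] := by
    have hinj : Function.Injective
        (fun j : Fin 2 => (⟨j.succ, Fin.succ_ne_zero j⟩ : {x : Fin 3 // x ≠ 0})) := by
      intro a b hab
      exact Fin.succ_injective _ (congrArg Subtype.val hab)
    have h1 := hli0.comp _ hinj
    have heqf : ((fun i : {x : Fin 3 // x ≠ 0} => ![A, B, C] ↑i -ᵥ ![A, B, C] 0)
        ∘ (fun j : Fin 2 => (⟨j.succ, Fin.succ_ne_zero j⟩ : {x : Fin 3 // x ≠ 0})))
        = ![u, v] := by
      funext j
      fin_cases j <;>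
        simp [Matrix.cons_val_one, Matrix.head_cons, vsub_eq_sub, hu, hv]
    rwa [heqf] at h1
  obtain ⟨hP, hQ, hD⟩ := obt_pos hind
  have hu0 : u ≠ 0 := by
    intro h; rw [h, inner_zero_left] at hP; exact lt_irrefl _ hP
  have hv0 : v ≠ 0 := by
    intro h; rw [h, inner_zero_left] at hQ; exact lt_irrefl _ hQ
  -- the obtuse angle gives a nonpositive inner product
  have hk : ⟪u, v⟫ ≤ 0 := by
    by_contra hpos
    push_neg at hpos
    have hang : EuclideanGeometry.angle B A C
        = Real.arccos (⟪B - A, C - A⟫ / (‖B - A‖ * ‖C - A‖)) := rfl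
    rw [← hu, ← hv] at hang
    have hlt : EuclideanGeometry.angle B A C < Real.pi / 2 := by
      rw [hang]
      exact Real.arccos_lt_pi_div_two.mpr
        (div_pos hpos (mul_pos (norm_pos_iff.mpr hu0) (norm_pos_iff.mpr hv0)))
    linarith
  have hS : (0:ℝ) < ⟪u,u⟫ + ⟪v,v⟫ - 2 * ⟪u,v⟫ := by linarith
  have hDS : (0:ℝ) < ((⟪u,u⟫ * ⟪v,v⟫ - ⟪u,v⟫^2) / (⟪u,u⟫ + ⟪v,v⟫ - 2 * ⟪u,v⟫)) := div_pos hD hS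
  -- the foot of the altitude from A
  set c1 : ℝ := (⟪v,v⟫ - ⟪u,v⟫) / (⟪u,u⟫ + ⟪v,v⟫ - 2 * ⟪u,v⟫) with hc1d
  set c2 : ℝ := (⟪u,u⟫ - ⟪u,v⟫) / (⟪u,u⟫ + ⟪v,v⟫ - 2 * ⟪u,v⟫) with hc2d
  set F : EuclideanSpace ℝ (Fin 2) := A + c1 • u + c2 • v with hF
  clear_value c1 c2 F
  have hc1 : 0 ≤ c1 := by rw [hc1d]; exact div_nonneg (by linarith) hS.le
  have hc2 : 0 ≤ c2 := by rw [hc2d]; exact div_nonneg (by linarith) hS.le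
  have hc12 : c1 + c2 = 1 := by
    rw [hc1d, hc2d, ← add_div, div_eq_one_iff_eq hS.ne']
    ring
  have hKset : ({A, B, C} : Set (EuclideanSpace ℝ (Fin 2))) = {A, A + u, A + v} := by
    rw [hBu, hCv]
  have hνdef : F - A = c1 • u + c2 • v := by rw [hF]; abel
  have hiu : ⟪u, F - A⟫ = ((⟪u,u⟫ * ⟪v,v⟫ - ⟪u,v⟫^2) / (⟪u,u⟫ + ⟪v,v⟫ - 2 * ⟪u,v⟫)) := by
    rw [hνdef, inner_add_right, real_inner_smul_right, real_inner_smul_right, hc1d, hc2d,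
      div_mul_eq_mul_div, div_mul_eq_mul_div, ← add_div,
      div_eq_div_iff hS.ne' hS.ne']
    ring
  have hiv : ⟪v, F - A⟫ = ((⟪u,u⟫ * ⟪v,v⟫ - ⟪u,v⟫^2) / (⟪u,u⟫ + ⟪v,v⟫ - 2 * ⟪u,v⟫)) := by
    rw [hνdef, inner_add_right, real_inner_smul_right, real_inner_smul_right,
      real_inner_comm u v, hc1d, hc2d,
      div_mul_eq_mul_div, div_mul_eq_mul_div, ← add_div,
      div_eq_div_iff hS.ne' hS.ne']
    ring
  have hiF : ⟪F - A, F - A⟫ = ((⟪u,u⟫ * ⟪v,v⟫ - ⟪u,v⟫^2) / (⟪u,u⟫ + ⟪v,v⟫ - 2 * ⟪u,v⟫)) := by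
    nth_rewrite 1 [hνdef]
    rw [inner_add_left, real_inner_smul_left, real_inner_smul_left, hiu, hiv]
    have e : c1 * (((⟪u,u⟫ * ⟪v,v⟫ - ⟪u,v⟫^2) / (⟪u,u⟫ + ⟪v,v⟫ - 2 * ⟪u,v⟫))) + c2 * (((⟪u,u⟫ * ⟪v,v⟫ - ⟪u,v⟫^2) / (⟪u,u⟫ + ⟪v,v⟫ - 2 * ⟪u,v⟫))) = (c1 + c2) * (((⟪u,u⟫ * ⟪v,v⟫ - ⟪u,v⟫^2) / (⟪u,u⟫ + ⟪v,v⟫ - 2 * ⟪u,v⟫))) := by ring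
    rw [e, hc12, one_mul]
  have hνne : F - A ≠ 0 := by
    intro h
    rw [h, inner_zero_right] at hiu
    exact hDS.ne hiu
  have hnormν : ‖F - A‖ = Real.sqrt ((⟪u,u⟫ * ⟪v,v⟫ - ⟪u,v⟫^2) / (⟪u,u⟫ + ⟪v,v⟫ - 2 * ⟪u,v⟫)) := by
    rw [← Real.sqrt_sq (norm_nonneg (F - A)), ← real_inner_self_eq_norm_sq, hiF]
  -- support inequalities at A and at F
  have hcoreA : ∀ y ∈ convexHull ℝ ({A, A + u, A + v} : Set (EuclideanSpace ℝ (Fin 2))),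
      0 ≤ ⟪y - A, F - A⟫ := by
    intro y hy
    obtain ⟨b, g, hb, hg, hbg, rfl⟩ := obt_tri_subset hy
    have e : A + b • u + g • v - A = b • u + g • v := by abel
    rw [e, inner_add_left, real_inner_smul_left, real_inner_smul_left, hiu, hiv]
    exact add_nonneg (mul_nonneg hb hDS.le) (mul_nonneg hg hDS.le)
  have hcoreF : ∀ y ∈ convexHull ℝ ({A, A + u, A + v} : Set (EuclideanSpace ℝ (Fin 2))),
      ⟪y - F, F - A⟫ ≤ 0 := by
    intro y hy
    obtain ⟨b, g, hb, hg, hbg, rfl⟩ := obt_tri_subset hy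
    have e : A + b • u + g • v - F = (b - c1) • u + (g - c2) • v := by rw [hF]; module
    rw [e, inner_add_left, real_inner_smul_left, real_inner_smul_left, hiu, hiv]
    have e2 : (b - c1) * (((⟪u,u⟫ * ⟪v,v⟫ - ⟪u,v⟫^2) / (⟪u,u⟫ + ⟪v,v⟫ - 2 * ⟪u,v⟫))) + (g - c2) * (((⟪u,u⟫ * ⟪v,v⟫ - ⟪u,v⟫^2) / (⟪u,u⟫ + ⟪v,v⟫ - 2 * ⟪u,v⟫))) = (b + g - 1) * (((⟪u,u⟫ * ⟪v,v⟫ - ⟪u,v⟫^2) / (⟪u,u⟫ + ⟪v,v⟫ - 2 * ⟪u,v⟫))) := by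
      rw [← hc12]; ring
    rw [e2]
    exact mul_nonpos_iff.mpr (Or.inr ⟨by linarith, hDS.le⟩)
  -- F lies on the segment BC
  have hFseg : F ∈ segment ℝ B C := by
    refine ⟨c1, c2, hc1, hc2, hc12, ?_⟩
    rw [← hBu, ← hCv, hF]
    match_scalars <;> linarith [hc12]
  have hFK : F ∈ convexHull ℝ ({A, B, C} : Set (EuclideanSpace ℝ (Fin 2))) :=
    segment_subset_convexHull (by simp) (by simp) hFseg
  have hAK : A ∈ convexHull ℝ ({A, B, C} : Set (EuclideanSpace ℝ (Fin 2))) :=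
    subset_convexHull _ _ (by simp)
  have hfrA : A ∈ frontier (convexHull ℝ ({A, B, C} : Set (EuclideanSpace ℝ (Fin 2)))) := by
    apply obt_mem_frontier_of_support hAK (neg_ne_zero.mpr hνne)
    intro y hy
    rw [inner_neg_right, neg_nonpos]
    exact hcoreA y (by rwa [hKset] at hy)
  have hfrF : F ∈ frontier (convexHull ℝ ({A, B, C} : Set (EuclideanSpace ℝ (Fin 2)))) := by
    apply obt_mem_frontier_of_support hFK hνne
    intro y hy
    exact hcoreF y (by rwa [hKset] at hy)
  have hFA : F ≠ A := fun h => hνne (by rw [h, sub_self])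
  -- the two-bounce trajectory
  set q2 : ZMod 2 → EuclideanSpace ℝ (Fin 2) := fun i => if i = 0 then A else F with hq2
  have hq20 : q2 0 = A := by rw [hq2]; simp
  have hq21 : q2 1 = F := by
    rw [hq2]
    exact if_neg (by decide)
  clear_value q2
  have hcases : ∀ i : ZMod 2, i = 0 ∨ i = 1 := by decide
  have hnormν0 : ‖F - A‖ ≠ 0 := by
    rw [hnormν]
    exact (Real.sqrt_pos.mpr hDS).ne'
  have hAFe : A - F = -(F - A) := (neg_sub F A).symm
  have htraj : IsClosedBilliardTraj
      (convexHull ℝ ({A, B, C} : Set (EuclideanSpace ℝ (Fin 2)))) q2 := by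
    refine ⟨le_refl 2, ?_, ?_, ?_⟩
    · intro i
      rcases hcases i with rfl | rfl
      · rw [hq20]; exact hfrA
      · rw [hq21]; exact hfrF
    · intro i
      rcases hcases i with rfl | rfl
      · rw [show (0 + 1 : ZMod 2) = 1 by decide, hq20, hq21]
        exact hFA
      · rw [show (1 + 1 : ZMod 2) = 0 by decide, hq20, hq21]
        exact fun h => hFA h.symm
    · intro i
      rcases hcases i with rfl | rfl
      · refine ⟨2, -(‖F - A‖⁻¹ • (F - A)), by norm_num, ?_, ?_, ?_⟩
        · rw [norm_neg, norm_smul, norm_inv, norm_norm, inv_mul_cancel₀ hnormν0]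
        · intro x hx
          rw [hq20, inner_neg_right, real_inner_smul_right, neg_nonpos]
          exact mul_nonneg (inv_nonneg.mpr (norm_nonneg _))
            (hcoreA x (by rwa [hKset] at hx))
        · rw [show (0 + 1 : ZMod 2) = 1 by decide, show (0 - 1 : ZMod 2) = 1 by decide,
            hq20, hq21, hAFe, norm_neg]
          module
      · refine ⟨2, ‖F - A‖⁻¹ • (F - A), by norm_num, ?_, ?_, ?_⟩
        · rw [norm_smul, norm_inv, norm_norm, inv_mul_cancel₀ hnormν0]
        · intro x hx
          rw [hq21, real_inner_smul_right]
          exact mul_nonpos_iff.mpr (Or.inl ⟨inv_nonneg.mpr (norm_nonneg _),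
            hcoreF x (by rwa [hKset] at hx)⟩)
        · rw [show (1 + 1 : ZMod 2) = 0 by decide, show (1 - 1 : ZMod 2) = 0 by decide,
            hq20, hq21, hAFe, norm_neg]
          module
  have hlen : billiardLength q2 = 2 * Real.sqrt ((⟪u,u⟫ * ⟪v,v⟫ - ⟪u,v⟫^2) / (⟪u,u⟫ + ⟪v,v⟫ - 2 * ⟪u,v⟫)) := by
    rw [billiardLength, show (Finset.univ : Finset (ZMod 2)) = {0, 1} by decide,
      Finset.sum_insert (by decide), Finset.sum_singleton,
      show (0 + 1 : ZMod 2) = 1 by decide, show (1 + 1 : ZMod 2) = 0 by decide,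
      hq20, hq21, hAFe, norm_neg, hnormν]
    ring
  -- the distance from A to the line BC
  have hlineBC : ∀ y ∈ (affineSpan ℝ ({B, C} : Set (EuclideanSpace ℝ (Fin 2))) :
      Set (EuclideanSpace ℝ (Fin 2))), Real.sqrt ((⟪u,u⟫ * ⟪v,v⟫ - ⟪u,v⟫^2) / (⟪u,u⟫ + ⟪v,v⟫ - 2 * ⟪u,v⟫)) ≤ dist A y := by
    intro y hy
    have hy' : (y - B) +ᵥ B ∈ affineSpan ℝ ({B, C} : Set (EuclideanSpace ℝ (Fin 2))) := by
      rwa [vadd_eq_add, sub_add_cancel]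
    obtain ⟨t, ht⟩ := vadd_left_mem_affineSpan_pair.mp hy'
    have h5 : y - B = t • (C - B) := by rw [← ht, vsub_eq_sub]
    have hCB : C - B = v - u := by rw [← hBu, ← hCv]; abel
    have hBA : B - A = u := by rw [← hBu]; abel
    have hyA : y - A = (1 - t) • u + t • v := by
      calc y - A = (y - B) + (B - A) := by abel
        _ = t • (v - u) + u := by rw [h5, hCB, hBA]
        _ = (1 - t) • u + t • v := by module
    rw [dist_eq_norm, show A - y = -(y - A) from (neg_sub y A).symm, norm_neg]
    apply obt_le_norm_of_sq (Real.sqrt_nonneg _)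
    rw [hyA, obt_inner_combo, Real.sq_sqrt (div_nonneg hD.le hS.le), div_le_iff₀ hS]
    nlinarith [sq_nonneg ((⟪u,u⟫ + ⟪v,v⟫ - 2 * ⟪u,v⟫) * t - (⟪u,u⟫ - ⟪u,v⟫))]
  have hFspan : F ∈ (affineSpan ℝ ({B, C} : Set (EuclideanSpace ℝ (Fin 2))) :
      Set (EuclideanSpace ℝ (Fin 2))) := by
    have hmem := AffineMap.lineMap_mem_affineSpan_pair (c2 : ℝ) B C
    have hFlm : (AffineMap.lineMap B C) c2 = F := by
      rw [AffineMap.lineMap_apply, vsub_eq_sub, vadd_eq_add, ← hBu, ← hCv, hF]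
      match_scalars <;> linarith [hc12]
    rwa [hFlm] at hmem
  have hdistAF : dist A F = Real.sqrt ((⟪u,u⟫ * ⟪v,v⟫ - ⟪u,v⟫^2) / (⟪u,u⟫ + ⟪v,v⟫ - 2 * ⟪u,v⟫)) := by
    rw [dist_eq_norm, show A - F = -(F - A) from (neg_sub F A).symm, norm_neg, hnormν]
  have hID : Metric.infDist A (affineSpan ℝ ({B, C} : Set (EuclideanSpace ℝ (Fin 2))) :
      Set (EuclideanSpace ℝ (Fin 2))) = Real.sqrt ((⟪u,u⟫ * ⟪v,v⟫ - ⟪u,v⟫^2) / (⟪u,u⟫ + ⟪v,v⟫ - 2 * ⟪u,v⟫)) := by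
    apply le_antisymm
    · calc Metric.infDist A _ ≤ dist A F := Metric.infDist_le_dist_of_mem hFspan
        _ = _ := hdistAF
    · by_contra hlt
      push_neg at hlt
      obtain ⟨y, hy, hylt⟩ :=
        (Metric.infDist_lt_iff ⟨B, left_mem_affineSpan_pair ℝ B C⟩).mp hlt
      exact absurd hylt (not_lt.mpr (hlineBC y hy))
  -- the value of alpha
  have halpha : alpha (convexHull ℝ ({A, B, C} : Set (EuclideanSpace ℝ (Fin 2))))
      = ENNReal.ofReal (2 * Real.sqrt ((⟪u,u⟫ * ⟪v,v⟫ - ⟪u,v⟫^2) / (⟪u,u⟫ + ⟪v,v⟫ - 2 * ⟪u,v⟫))) := by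
    apply le_antisymm
    · have h1 : alpha (convexHull ℝ ({A, B, C} : Set (EuclideanSpace ℝ (Fin 2))))
          ≤ ENNReal.ofReal (billiardLength q2) := by
        unfold alpha
        exact iInf_le_of_le 2 (iInf_le_of_le ⟨two_ne_zero⟩
          (iInf_le_of_le q2 (iInf_le_of_le htraj le_rfl)))
      rwa [hlen] at h1
    · unfold alpha
      refine le_iInf fun m => le_iInf fun hm => le_iInf fun q' => le_iInf fun hq' => ?_
      haveI := hm
      apply ENNReal.ofReal_le_ofReal
      apply obt_lower_bound hind hk
      rwa [hKset] at hq'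
  refine ⟨?_, F, hFseg, ?_, q2, htraj, hq20, hq21, ?_⟩
  · rw [hID]
    exact halpha
  · rw [hID]
    exact hdistAF
  · rw [hID]
    exact hlen
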